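/- Let f, g₁, …, g_m : ℝ^n → ℝ be convex polynomials and K = {x ∈ ℝ^n : gᵢ(x) ≤ 0 for all i} nonempty. If inf_{x ∈ K} f(x) > −∞, then the infimum is attained: there exists x* ∈ K with f(x*) = inf_{x ∈ K} f(x). -/

import Mathlib

open MvPolynomial Set Filter Topology

/-- small arithmetic helper: if `t * A ≤ B` for all positive `t`, then `A ≤ 0`. -/
lemma nonpos_of_forall_mul_le {A B : ℝ} (h : ∀ t : ℝ, 0 < t → t * A ≤ B) : A ≤ 0 := by
  by_contra hA
  push_neg at hA
  have ht : (0:ℝ) < (|B| + 1) / A := by positivity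
  have := h _ ht
  rw [div_mul_cancel₀ _ (ne_of_gt hA)] at this
  have : |B| < B := by linarith
  exact absurd (le_abs_self B) (not_le.mpr this)

/-- A real polynomial bounded (in absolute value) on `[a, ∞)` is constant. -/
lemma poly_const_of_bdd (P : Polynomial ℝ) (a M : ℝ) (h : ∀ t : ℝ, a ≤ t → |P.eval t| ≤ M) :
    ∃ c : ℝ, P = Polynomial.C c := by
  have hdeg : P.degree ≤ 0 := by
    by_contra hd
    have habs := Polynomial.abs_tendsto_atTop P (lt_of_not_ge hd)
    obtain ⟨t, h2, h3⟩ := ((habs.eventually_ge_atTop (M + 1)).and (eventually_ge_atTop a)).exists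
    have := h t h3
    linarith
  exact ⟨P.coeff 0, Polynomial.eq_C_of_degree_le_zero hdeg⟩

/-- three-point convexity inequality for polynomials, in multiplied-out form -/
lemma convex_three {P : Polynomial ℝ} (hc : ConvexOn ℝ Set.univ fun t : ℝ => P.eval t)
    {s t u : ℝ} (hst : s < t) (htu : t < u) :
    (u - s) * P.eval t ≤ (u - t) * P.eval s + (t - s) * P.eval u := by
  have husne : (0:ℝ) < u - s := by linarith
  have ha : (0:ℝ) ≤ (u - t) / (u - s) := by apply div_nonneg <;> linarith
  have hb : (0:ℝ) ≤ (t - s) / (u - s) := by apply div_nonneg <;> linarith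
  have hab : (u - t) / (u - s) + (t - s) / (u - s) = 1 := by
    rw [← add_div, show u - t + (t - s) = u - s by ring, div_self (ne_of_gt husne)]
  have hcomb : ((u - t) / (u - s)) • s + ((t - s) / (u - s)) • u = t := by
    rw [smul_eq_mul, smul_eq_mul, div_mul_eq_mul_div, div_mul_eq_mul_div, ← add_div,
      div_eq_iff (ne_of_gt husne)]
    ring
  have h := hc.2 (Set.mem_univ s) (Set.mem_univ u) ha hb hab
  rw [hcomb] at h
  simp only [smul_eq_mul] at h
  rw [div_mul_eq_mul_div, div_mul_eq_mul_div, ← add_div, le_div_iff₀ husne] at h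
  linarith

/-- A convex real polynomial bounded above on `[0,∞)` is affine with nonpositive slope. -/
lemma convex_poly_affine (P : Polynomial ℝ) (hc : ConvexOn ℝ Set.univ fun t : ℝ => P.eval t)
    (M : ℝ) (hM : ∀ t : ℝ, 0 ≤ t → P.eval t ≤ M) :
    ∃ c : ℝ, c ≤ 0 ∧ ∀ t : ℝ, P.eval t = P.eval 0 + c * t := by
  -- step 1: P.eval is antitone
  have hanti : ∀ s t : ℝ, s < t → P.eval t ≤ P.eval s := by
    intro s t hst
    by_contra hcon
    push_neg at hcon
    set D := (P.eval t - P.eval s) / (t - s) with hD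
    have hDpos : 0 < D := div_pos (by linarith) (by linarith)
    set u := max t 0 + max ((M + 1 - P.eval t) / D) 1 with hu
    have hmax1 : (1:ℝ) ≤ max ((M + 1 - P.eval t) / D) 1 := le_max_right _ _
    have hut : t < u := by
      have := le_max_left t 0
      simp only [hu]; linarith
    have hu0 : 0 ≤ u := by
      have := le_max_right t 0
      simp only [hu]; linarith
    have hkey : (u - s) * P.eval t ≤ (u - t) * P.eval s + (t - s) * P.eval u :=
      convex_three hc hst hut
    -- deduce P.eval u ≥ P.eval t + (u - t) * D
    have hts : (0:ℝ) < t - s := by linarith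
    have hDmul : (u - t) * D * (t - s) = (u - t) * (P.eval t - P.eval s) := by
      rw [hD]; field_simp
    have hlow : P.eval t + (u - t) * D ≤ P.eval u := by
      have h2 : (P.eval t + (u - t) * D) * (t - s) ≤ P.eval u * (t - s) := by
        nlinarith [hkey, hDmul]
      exact le_of_mul_le_mul_right h2 hts
    have hbig : M + 1 - P.eval t ≤ (u - t) * D := by
      have h1 : (M + 1 - P.eval t) / D ≤ u - t := by
        have := le_max_left ((M + 1 - P.eval t) / D) 1
        have := le_max_right t 0
        simp only [hu]; linarith [le_max_left t 0]
      calc M + 1 - P.eval t = (M + 1 - P.eval t) / D * D := by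
            field_simp
        _ ≤ (u - t) * D := by
            apply mul_le_mul_of_nonneg_right h1 (le_of_lt hDpos)
    have := hM u hu0
    linarith
  -- step 2: prove slope function bounded on [1,∞)
  obtain ⟨R, hR⟩ : Polynomial.X ∣ (P - Polynomial.C (P.eval 0)) := by
    rw [Polynomial.X_dvd_iff]
    simp [Polynomial.coeff_zero_eq_eval_zero]
  have hReval : ∀ u : ℝ, u ≠ 0 → R.eval u = (P.eval u - P.eval 0) / u := by
    intro u hu
    have := congrArg (Polynomial.eval u) hR
    simp only [Polynomial.eval_sub, Polynomial.eval_C, Polynomial.eval_mul,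
      Polynomial.eval_X] at this
    field_simp
    linarith [this]
  have hslope : ∀ u : ℝ, 1 ≤ u → P.eval 1 - P.eval 0 ≤ (P.eval u - P.eval 0) / u := by
    intro u hu
    rcases eq_or_lt_of_le hu with h1 | h1
    · rw [← h1]; simp
    have hkey := convex_three hc (show (0:ℝ) < 1 by norm_num) h1
    rw [le_div_iff₀ (by linarith : (0:ℝ) < u)]
    nlinarith [hkey]
  have hRbdd : ∀ u : ℝ, 1 ≤ u → |R.eval u| ≤ |P.eval 1 - P.eval 0| := by
    intro u hu
    have hne : u ≠ 0 := by linarith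
    rw [hReval u hne]
    have h1 : P.eval 1 - P.eval 0 ≤ (P.eval u - P.eval 0) / u := hslope u hu
    have h2 : (P.eval u - P.eval 0) / u ≤ 0 := by
      apply div_nonpos_of_nonpos_of_nonneg
      · have := hanti 0 u (by linarith)
        linarith
      · linarith
    rw [abs_of_nonpos h2]
    have h3 : P.eval 1 - P.eval 0 ≤ 0 := le_trans h1 h2
    rw [abs_of_nonpos h3]
    linarith
  obtain ⟨c, hc'⟩ := poly_const_of_bdd R 1 _ hRbdd
  refine ⟨c, ?_, ?_⟩
  · have h1 : R.eval 1 = c := by rw [hc']; simp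
    rw [hReval 1 one_ne_zero] at h1
    have := hanti 0 1 one_pos
    simp at h1
    linarith
  · intro t
    have := congrArg (Polynomial.eval t) hR
    simp only [Polynomial.eval_sub, Polynomial.eval_C, Polynomial.eval_mul,
      Polynomial.eval_X, hc'] at this
    linarith

/-- evaluation of a multivariate polynomial is continuous -/
lemma continuous_mveval {N : ℕ} (p : MvPolynomial (Fin N) ℝ) :
    Continuous fun x : Fin N → ℝ => MvPolynomial.eval x p := by
  apply MvPolynomial.induction_on p
  · intro a; simpa using continuous_const
  · intro p q hp hq; simp only [map_add]; exact hp.add hq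
  · intro p k hp; simp only [map_mul, MvPolynomial.eval_X]
    exact hp.mul (continuous_apply k)

/-- restriction of a multivariate polynomial to a line is a one-variable polynomial -/
lemma line_poly {N : ℕ} (p : MvPolynomial (Fin N) ℝ) (x d : Fin N → ℝ) :
    ∃ q : Polynomial ℝ, ∀ t : ℝ, Polynomial.eval t q = MvPolynomial.eval (x + t • d) p := by
  refine ⟨MvPolynomial.eval₂ Polynomial.C
    (fun i => Polynomial.C (x i) + Polynomial.C (d i) * Polynomial.X) p, fun t => ?_⟩
  have h := MvPolynomial.eval₂_comp_left (Polynomial.evalRingHom t) Polynomial.C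
    (fun i => Polynomial.C (x i) + Polynomial.C (d i) * Polynomial.X) p
  simp only [Polynomial.coe_evalRingHom] at h
  rw [h]
  have h1 : (Polynomial.evalRingHom t).comp Polynomial.C = RingHom.id ℝ := by
    ext r; simp
  rw [h1]
  have h2 : ((Polynomial.eval t) ∘ fun i => Polynomial.C (x i) + Polynomial.C (d i) * Polynomial.X)
      = fun i => (x + t • d) i := by
    funext i
    simp only [Function.comp_apply, Polynomial.eval_add, Polynomial.eval_C,
      Polynomial.eval_mul, Polynomial.eval_X, Pi.add_apply, Pi.smul_apply, smul_eq_mul]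
    ring
  rw [h2]
  rfl

/-- convexity along a line -/
lemma convexOn_line {N : ℕ} {h : (Fin N → ℝ) → ℝ} (hcv : ConvexOn ℝ Set.univ h)
    (x d : Fin N → ℝ) : ConvexOn ℝ Set.univ fun t : ℝ => h (x + t • d) := by
  refine ⟨convex_univ, fun s _ t _ a b ha hb hab => ?_⟩
  have e : a • (x + s • d) + b • (x + t • d) = x + (a • s + b • t) • d := by
    simp only [smul_add, smul_smul, smul_eq_mul]
    rw [add_add_add_comm, ← add_smul, ← add_smul, hab, one_smul]
  have := hcv.2 (Set.mem_univ (x + s • d)) (Set.mem_univ (x + t • d)) ha hb hab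
  rw [e] at this
  simpa using this

/-- an unbounded closed convex set contains a ray from any of its points -/
lemma exists_ray {N : ℕ} {S : Set (Fin N → ℝ)} (hconv : Convex ℝ S) (hcl : IsClosed S)
    (hub : ¬Bornology.IsBounded S) {x₀ : Fin N → ℝ} (hx₀ : x₀ ∈ S) :
    ∃ d : Fin N → ℝ, d ≠ 0 ∧ ∀ t : ℝ, 0 ≤ t → x₀ + t • d ∈ S := by
  have hseq : ∀ k : ℕ, ∃ x, x ∈ S ∧ (k : ℝ) + ‖x₀‖ + 1 ≤ ‖x‖ := by
    intro k
    by_contra hcon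
    push_neg at hcon
    exact hub (isBounded_iff_forall_norm_le.mpr ⟨(k : ℝ) + ‖x₀‖ + 1,
      fun x hx => le_of_lt (hcon x hx)⟩)
  choose x hxS hxn using hseq
  have hr : ∀ k : ℕ, (k : ℝ) + 1 ≤ ‖x k - x₀‖ := by
    intro k
    have h1 := norm_sub_norm_le (x k) x₀
    have := hxn k
    linarith
  have hrpos : ∀ k : ℕ, 0 < ‖x k - x₀‖ := by
    intro k
    have := hr k
    have : (0:ℝ) ≤ (k : ℝ) := Nat.cast_nonneg k
    linarith [hr k]
  set u : ℕ → (Fin N → ℝ) := fun k => ‖x k - x₀‖⁻¹ • (x k - x₀) with hu_def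
  have hu : ∀ k, u k ∈ Metric.sphere (0 : Fin N → ℝ) 1 := by
    intro k
    rw [mem_sphere_zero_iff_norm, hu_def, norm_smul, norm_inv, norm_norm,
      inv_mul_cancel₀ (ne_of_gt (hrpos k))]
  obtain ⟨d, hd_mem, φ, hφ, hconv_t⟩ :=
    (isCompact_sphere (0 : Fin N → ℝ) 1).tendsto_subseq hu
  have hd1 : ‖d‖ = 1 := mem_sphere_zero_iff_norm.mp hd_mem
  refine ⟨d, fun h0 => by simp [h0] at hd1, fun t ht => ?_⟩
  have hmemk : ∀ k : ℕ, t ≤ ‖x (φ k) - x₀‖ → x₀ + t • u (φ k) ∈ S := by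
    intro k hk
    set r := ‖x (φ k) - x₀‖ with hr_def
    have hrp : 0 < r := hrpos (φ k)
    have ha : (0:ℝ) ≤ 1 - t / r := by
      have : t / r ≤ 1 := by rw [div_le_one hrp]; exact hk
      linarith
    have hb : (0:ℝ) ≤ t / r := div_nonneg ht (le_of_lt hrp)
    have hmem := hconv hx₀ (hxS (φ k)) ha hb (by ring)
    have he : (1 - t / r) • x₀ + (t / r) • x (φ k) = x₀ + t • u (φ k) := by
      rw [hu_def]
      simp only [smul_smul]
      rw [show t * r⁻¹ = t / r by rw [div_eq_mul_inv], sub_smul, one_smul, smul_sub]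
      abel
    rwa [he] at hmem
  have hev : ∀ᶠ k in atTop, x₀ + t • u (φ k) ∈ S := by
    filter_upwards [eventually_ge_atTop ⌈t⌉₊] with k hk
    apply hmemk
    have h1 : (k : ℝ) ≤ (φ k : ℝ) := Nat.cast_le.mpr hφ.le_apply
    have h2 : t ≤ (⌈t⌉₊ : ℝ) := Nat.le_ceil t
    have h3 : ((⌈t⌉₊ : ℕ) : ℝ) ≤ (k : ℝ) := Nat.cast_le.mpr hk
    linarith [hr (φ k)]
  have htend : Tendsto (fun k => x₀ + t • u (φ k)) atTop (𝓝 (x₀ + t • d)) :=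
    tendsto_const_nhds.add (hconv_t.const_smul t)
  exact hcl.mem_of_tendsto htend hev

/-- a convex polynomial function bounded above on a ray is affine in that direction,
with the same nonpositive slope everywhere -/
lemma affine_along {N : ℕ} (h : (Fin N → ℝ) → ℝ) (p : MvPolynomial (Fin N) ℝ)
    (hp : ∀ x, h x = MvPolynomial.eval x p) (hcv : ConvexOn ℝ Set.univ h)
    (x₀ d : Fin N → ℝ) (M : ℝ) (hb : ∀ t : ℝ, 0 ≤ t → h (x₀ + t • d) ≤ M) :
    ∃ γ : ℝ, γ ≤ 0 ∧ ∀ (x : Fin N → ℝ) (t : ℝ), h (x + t • d) = h x + t * γ := by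
  -- step 1: pointwise affineness
  have step1 : ∀ x : Fin N → ℝ, ∃ c : ℝ, c ≤ 0 ∧ ∀ t : ℝ, h (x + t • d) = h x + c * t := by
    intro x
    obtain ⟨q, hq⟩ := line_poly p x d
    have hq' : ∀ t : ℝ, Polynomial.eval t q = h (x + t • d) := by
      intro t; rw [hq, hp]
    have hqc : ConvexOn ℝ Set.univ fun t : ℝ => Polynomial.eval t q := by
      have := convexOn_line hcv x d
      have he : (fun t : ℝ => Polynomial.eval t q) = fun t : ℝ => h (x + t • d) :=
        funext hq'
      rwa [he]
    -- boundedness above on the ray from x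
    have hbd : ∀ t : ℝ, 0 ≤ t → Polynomial.eval t q ≤ M / 2 + h ((2:ℝ) • x - x₀) / 2 := by
      intro t ht
      rw [hq']
      have he : x + t • d = (1/2 : ℝ) • (x₀ + (2*t) • d) + (1/2 : ℝ) • ((2:ℝ) • x - x₀) := by
        module
      rw [he]
      have := hcv.2 (Set.mem_univ (x₀ + (2*t) • d)) (Set.mem_univ ((2:ℝ) • x - x₀))
        (by norm_num : (0:ℝ) ≤ 1/2) (by norm_num : (0:ℝ) ≤ 1/2) (by norm_num)
      have hray := hb (2*t) (by linarith)
      simp only [smul_eq_mul] at this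
      calc h ((1/2 : ℝ) • (x₀ + (2*t) • d) + (1/2 : ℝ) • ((2:ℝ) • x - x₀))
          ≤ 1/2 * h (x₀ + (2*t) • d) + 1/2 * h ((2:ℝ) • x - x₀) := this
        _ ≤ M / 2 + h ((2:ℝ) • x - x₀) / 2 := by linarith
    obtain ⟨c, hc0, hcform⟩ := convex_poly_affine q hqc _ hbd
    refine ⟨c, hc0, fun t => ?_⟩
    have h0 : Polynomial.eval (0:ℝ) q = h x := by
      rw [hq']; simp
    rw [← hq', hcform t, h0, mul_comm]
  choose c hcle hceq using step1
  -- step 2: the slope is independent of the base point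
  have step2 : ∀ w x : Fin N → ℝ, c w ≤ c x := by
    intro w x
    set y := (2 : ℝ) • w - x with hy
    have hB : ∀ t : ℝ, 0 < t → t * (c w - c x) ≤ h x / 2 + h y / 2 - h w := by
      intro t ht
      have he : w + t • d = (1/2 : ℝ) • (x + (2*t) • d) + (1/2 : ℝ) • y := by
        rw [hy]
        module
      have hcvx := hcv.2 (Set.mem_univ (x + (2*t) • d)) (Set.mem_univ y)
        (by norm_num : (0:ℝ) ≤ 1/2) (by norm_num : (0:ℝ) ≤ 1/2) (by norm_num)
      rw [← he] at hcvx
      simp only [smul_eq_mul] at hcvx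
      rw [hceq w t, hceq x (2*t)] at hcvx
      nlinarith [hcvx]
    exact sub_nonpos.mp (nonpos_of_forall_mul_le hB)
  obtain ⟨x₁⟩ : Nonempty (Fin N → ℝ) := ⟨fun _ => 0⟩
  refine ⟨c x₁, hcle x₁, fun x t => ?_⟩
  have : c x = c x₁ := le_antisymm (step2 x x₁) (step2 x₁ x)
  rw [hceq x t, this, mul_comm]

/-- substituting `0` into one variable of a multivariate polynomial -/
lemma insertNth_poly {N : ℕ} (p : MvPolynomial (Fin (N + 1)) ℝ) (j : Fin (N + 1)) :
    ∃ q : MvPolynomial (Fin N) ℝ, ∀ y : Fin N → ℝ,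
      MvPolynomial.eval y q = MvPolynomial.eval (j.insertNth 0 y) p := by
  refine ⟨MvPolynomial.eval₂ MvPolynomial.C
    (j.insertNth 0 fun k => MvPolynomial.X k) p, fun y => ?_⟩
  have h := MvPolynomial.eval₂_comp_left (MvPolynomial.eval y) MvPolynomial.C
    (j.insertNth 0 fun k => MvPolynomial.X k) p
  rw [h]
  have h1 : (MvPolynomial.eval y).comp (MvPolynomial.C (σ := Fin N) (R := ℝ)) = RingHom.id ℝ := by
    ext r; simp
  rw [h1]
  have h2 : ((MvPolynomial.eval y) ∘ (j.insertNth 0 fun k => MvPolynomial.X k))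
      = j.insertNth 0 y := by
    funext i
    refine Fin.succAboveCases j ?_ ?_ i
    · simp [Fin.insertNth_apply_same]
    · intro k
      simp [Fin.insertNth_apply_succAbove]
  rw [h2]
  rfl

/-- inserting `0` is linear -/
lemma insertNth_zero_linear {N : ℕ} (j : Fin (N + 1)) (a b : ℝ) (y z : Fin N → ℝ) :
    (j.insertNth (0:ℝ) (a • y + b • z) : Fin (N+1) → ℝ)
      = a • (j.insertNth (0:ℝ) y : Fin (N+1) → ℝ) + b • (j.insertNth (0:ℝ) z : Fin (N+1) → ℝ) := by
  funext i
  refine Fin.succAboveCases j ?_ ?_ i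
  · simp [Fin.insertNth_apply_same]
  · intro k
    simp [Fin.insertNth_apply_succAbove]

/-- Belousov–Klatte, curried induction form -/
theorem BK_aux (N : ℕ) :
    ∀ (m : ℕ) (f : (Fin N → ℝ) → ℝ) (g : Fin m → (Fin N → ℝ) → ℝ),
    (∃ p, ∀ x, f x = MvPolynomial.eval x p) →
    (∀ i, ∃ p, ∀ x, g i x = MvPolynomial.eval x p) →
    ConvexOn ℝ Set.univ f → (∀ i, ConvexOn ℝ Set.univ (g i)) →
    {x | ∀ i, g i x ≤ 0}.Nonempty →
    BddBelow (f '' {x | ∀ i, g i x ≤ 0}) →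
    ∃ xs ∈ {x | ∀ i, g i x ≤ 0}, ∀ x ∈ {x | ∀ i, g i x ≤ 0}, f xs ≤ f x := by
  induction N with
  | zero =>
    intro m f g _ _ _ _ hne _
    obtain ⟨x₀, hx₀⟩ := hne
    refine ⟨x₀, hx₀, fun x _ => ?_⟩
    have : x = x₀ := by funext i; exact i.elim0
    rw [this]
  | succ N IH =>
    intro m f g hfp hgp hfc hgc hne hbd
    classical
    obtain ⟨pf, hpf⟩ := hfp
    choose pg hpg using hgp
    set K := {x : Fin (N+1) → ℝ | ∀ i, g i x ≤ 0} with hKdef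
    have hfcont : Continuous f := by
      have hfe : f = fun x => MvPolynomial.eval x pf := funext hpf
      rw [hfe]; exact continuous_mveval pf
    have hgcont : ∀ i, Continuous (g i) := by
      intro i
      have hge : g i = fun x => MvPolynomial.eval x (pg i) := funext (hpg i)
      rw [hge]; exact continuous_mveval (pg i)
    have hKi : K = ⋂ i, {x | g i x ≤ 0} := by
      ext x; simp [hKdef, Set.mem_iInter]
    have hKcl : IsClosed K := by
      rw [hKi]
      exact isClosed_iInter fun i => isClosed_le (hgcont i) continuous_const
    have hKcv : Convex ℝ K := by
      rw [hKi]
      exact convex_iInter fun i => by simpa using (hgc i).convex_le 0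
    set μ := sInf (f '' K) with hμ
    have hμle : ∀ x ∈ K, μ ≤ f x := fun x hx => csInf_le hbd ⟨x, hx, rfl⟩
    set S := K ∩ {x | f x ≤ μ + 1} with hSdef
    have hSne : S.Nonempty := by
      obtain ⟨b, ⟨x1, hx1, rfl⟩, hlt⟩ :=
        (csInf_lt_iff hbd (hne.image f)).mp (lt_add_one μ)
      exact ⟨x1, hx1, le_of_lt hlt⟩
    have hScl : IsClosed S := hKcl.inter (isClosed_le hfcont continuous_const)
    have hScv : Convex ℝ S := hKcv.inter (by simpa using hfc.convex_le (μ + 1))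
    by_cases hSb : Bornology.IsBounded S
    · -- bounded case: compactness
      have hcpt : IsCompact S := Metric.isCompact_of_isClosed_isBounded hScl hSb
      obtain ⟨xs, hxsS, hmin⟩ := hcpt.exists_isMinOn hSne hfcont.continuousOn
      refine ⟨xs, hxsS.1, fun x hx => ?_⟩
      rcases le_or_gt (f x) (μ + 1) with hc | hc
      · exact hmin ⟨hx, hc⟩
      · exact le_of_lt (lt_of_le_of_lt hxsS.2 hc)
    · -- unbounded case: reduce dimension
      obtain ⟨x₀, hx₀S⟩ := hSne
      obtain ⟨d, hd0, hray⟩ := exists_ray hScv hScl hSb hx₀S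
      obtain ⟨γf, hγf0, hγf⟩ := affine_along f pf hpf hfc x₀ d (μ + 1)
        (fun t ht => (hray t ht).2)
      have hγg : ∀ i, ∃ γ, γ ≤ 0 ∧ ∀ x t, g i (x + t • d) = g i x + t * γ :=
        fun i => affine_along (g i) (pg i) (hpg i) (hgc i) x₀ d 0
          (fun t ht => (hray t ht).1 i)
      choose γ hγle hγeq using hγg
      have hγf_zero : γf = 0 := by
        rcases lt_or_eq_of_le hγf0 with hlt | heq
        · exfalso
          set t := (f x₀ + 1 - μ) / (-γf) with ht
          have htpos : 0 < t :=
            div_pos (by linarith [hμle x₀ hx₀S.1]) (by linarith)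
          have hm : μ ≤ f (x₀ + t • d) := hμle _ (hray t (le_of_lt htpos)).1
          rw [hγf x₀ t] at hm
          have hne : γf ≠ 0 := ne_of_lt hlt
          have htγ : t * γf = -(f x₀ + 1 - μ) := by
            rw [ht, div_mul_eq_mul_div, div_neg, mul_div_assoc, div_self hne]
            ring
          linarith
        · exact heq
      obtain ⟨j, hj⟩ := Function.ne_iff.mp hd0
      have hj' : d j ≠ 0 := hj
      set ι : (Fin N → ℝ) → (Fin (N+1) → ℝ) := fun y => j.insertNth 0 y with hι
      set f' : (Fin N → ℝ) → ℝ := fun y => f (ι y) with hf'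
      set g' : Fin m → (Fin N → ℝ) → ℝ := fun i y => if γ i = 0 then g i (ι y) else 0 with hg'
      set ρ : (Fin (N+1) → ℝ) → (Fin N → ℝ) :=
        fun x k => (x + (-(x j / d j)) • d) (j.succAbove k) with hρdef
      have hιρ : ∀ x : Fin (N+1) → ℝ, ι (ρ x) = x + (-(x j / d j)) • d := by
        intro x
        funext i
        refine Fin.succAboveCases j ?_ ?_ i
        · simp only [hι, Fin.insertNth_apply_same, Pi.add_apply, Pi.smul_apply, smul_eq_mul]
          field_simp
          ring
        · intro k
          simp only [hι, hρdef, Fin.insertNth_apply_succAbove]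
      have hcomp : ∀ h : (Fin (N+1) → ℝ) → ℝ, ConvexOn ℝ Set.univ h →
          ConvexOn ℝ Set.univ fun y => h (ι y) := by
        intro h hcv
        refine ⟨convex_univ, fun y _ z _ a b ha hb hab => ?_⟩
        have h2 := hcv.2 (Set.mem_univ (ι y)) (Set.mem_univ (ι z)) ha hb hab
        rw [hι]
        simp only []
        rw [insertNth_zero_linear j a b y z]
        exact h2
      -- polynomial witnesses for the reduced problem
      have hf'p : ∃ p, ∀ y, f' y = MvPolynomial.eval y p := by
        obtain ⟨q, hq⟩ := insertNth_poly pf j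
        refine ⟨q, fun y => ?_⟩
        simp only [hf', hι]
        rw [hpf]
        exact (hq y).symm
      have hg'p : ∀ i, ∃ p, ∀ y, g' i y = MvPolynomial.eval y p := by
        intro i
        by_cases hγi : γ i = 0
        · obtain ⟨q, hq⟩ := insertNth_poly (pg i) j
          refine ⟨q, fun y => ?_⟩
          simp only [hg', hι, if_pos hγi]
          rw [hpg]
          exact (hq y).symm
        · exact ⟨0, fun y => by simp [hg', if_neg hγi]⟩
      have hf'c : ConvexOn ℝ Set.univ f' := hcomp f hfc
      have hg'c : ∀ i, ConvexOn ℝ Set.univ (g' i) := by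
        intro i
        by_cases hγi : γ i = 0
        · have := hcomp (g i) (hgc i)
          have he : g' i = fun y => g i (ι y) := by
            funext y; simp [hg', if_pos hγi]
          rwa [he]
        · have he : g' i = fun _ => (0:ℝ) := by
            funext y; simp [hg', if_neg hγi]
          rw [he]
          exact convexOn_const 0 convex_univ
      set K' := {y : Fin N → ℝ | ∀ i, g' i y ≤ 0} with hK'def
      -- F1 : lifting points of K' into K
      have hF1 : ∀ y ∈ K', ∃ T : ℝ, (ι y + T • d) ∈ K ∧ f (ι y + T • d) = f' y := by
        intro y hy
        set T := ∑ i : Fin m, max (g i (ι y) / (-(γ i))) 0 with hT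
        have hTge : ∀ i, max (g i (ι y) / (-(γ i))) 0 ≤ T := by
          intro i
          exact Finset.single_le_sum (f := fun i => max (g i (ι y) / (-(γ i))) 0)
            (fun i _ => le_max_right _ _) (Finset.mem_univ i)
        refine ⟨T, ?_, ?_⟩
        · intro i
          rw [hγeq i (ι y) T]
          by_cases hγi : γ i = 0
          · have hgy : g i (ι y) ≤ 0 := by
              have h4 := hy i
              simp only [hg', if_pos hγi] at h4
              exact h4
            rw [hγi]
            simpa using hgy
          · have hγneg : γ i < 0 := lt_of_le_of_ne (hγle i) hγi
            have h1 : g i (ι y) / (-(γ i)) ≤ T := le_trans (le_max_left _ _) (hTge i)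
            have h2 : T * γ i ≤ (g i (ι y) / (-(γ i))) * γ i :=
              mul_le_mul_of_nonpos_right h1 (le_of_lt hγneg)
            have h3 : (g i (ι y) / (-(γ i))) * γ i = - g i (ι y) := by
              rw [div_mul_eq_mul_div, div_neg, mul_div_assoc, div_self hγi]
              ring
            linarith
        · simp only [hf']
          rw [hγf (ι y) T, hγf_zero]
          ring
      -- F2 : projecting points of K into K'
      have hF2 : ∀ x ∈ K, ρ x ∈ K' ∧ f' (ρ x) = f x := by
        intro x hx
        constructor
        · intro i
          by_cases hγi : γ i = 0
          · show g' i (ρ x) ≤ 0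
            simp only [hg', if_pos hγi]
            rw [hιρ x, hγeq i x (-(x j / d j)), hγi]
            simpa using hx i
          · show g' i (ρ x) ≤ 0
            simp [hg', if_neg hγi]
        · show f' (ρ x) = f x
          simp only [hf']
          rw [hιρ x, hγf x (-(x j / d j)), hγf_zero]
          ring
      have hK'ne : K'.Nonempty := ⟨ρ x₀, (hF2 x₀ hx₀S.1).1⟩
      have hbd' : BddBelow (f' '' K') := by
        refine ⟨μ, fun v hv => ?_⟩
        obtain ⟨y, hy, rfl⟩ := hv
        obtain ⟨T, hTK, hTf⟩ := hF1 y hy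
        rw [← hTf]
        exact hμle _ hTK
      obtain ⟨ys, hysK', hysmin⟩ := IH m f' g' hf'p hg'p hf'c hg'c hK'ne hbd'
      obtain ⟨T, hTK, hTf⟩ := hF1 ys hysK'
      refine ⟨ι ys + T • d, hTK, fun x hx => ?_⟩
      calc f (ι ys + T • d) = f' ys := hTf
        _ ≤ f' (ρ x) := hysmin _ (hF2 x hx).1
        _ = f x := (hF2 x hx).2

/-- A convex polynomial program bounded below attains its infimum (Belousov–Klatte). -/
theorem convex_poly_program_attains_inf {n m : ℕ}
    (pf : MvPolynomial (Fin n) ℝ) (pg : Fin m → MvPolynomial (Fin n) ℝ)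
    (f : (Fin n → ℝ) → ℝ) (g : Fin m → (Fin n → ℝ) → ℝ)
    (hf : ∀ x, f x = MvPolynomial.eval x pf)
    (hg : ∀ i x, g i x = MvPolynomial.eval x (pg i))
    (hfc : ConvexOn ℝ Set.univ f) (hgc : ∀ i, ConvexOn ℝ Set.univ (g i))
    (K : Set (Fin n → ℝ)) (hK : K = {x | ∀ i, g i x ≤ 0}) (hKne : K.Nonempty)
    (hbd : BddBelow (f '' K)) :
    ∃ xs ∈ K, ∀ x ∈ K, f xs ≤ f x := by
  subst hK
  exact BK_aux n m f g ⟨pf, hf⟩ (fun i => ⟨pg i, hg i⟩) hfc hgc hKne hbd
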